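/- For A ≡ 1 in one dimension on a uniform mesh, the localized basis function obtained by solving −φ'' = g on a patch of 3 consecutive intervals with homogeneous Dirichlet boundary conditions, where g is the piecewise constant function orthogonal to affine functions on the patch (g taking values proportional to 1, −2, 1 on the three intervals), is (a scalar multiple of) the quadratic B-spline with knots at the four mesh points of the patch. -/

import Mathlib

open Set

/-- The quadratic B-spline on the patch. -/
noncomputable def s9Bdef (H x0 : ℝ) : ℝ → ℝ := fun x =>
  if x ≤ x0 + H then ((x - x0) / H) ^ 2 / 2
  else if x ≤ x0 + 2 * H then (-2 * ((x - x0) / H) ^ 2 + 6 * ((x - x0) / H) - 3) / 2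
  else (3 - (x - x0) / H) ^ 2 / 2

/-- Its derivative. -/
noncomputable def s9Bd (H x0 : ℝ) : ℝ → ℝ := fun x =>
  if x ≤ x0 + H then (x - x0) / H ^ 2
  else if x ≤ x0 + 2 * H then (3 * H - 2 * (x - x0)) / H ^ 2
  else ((x - x0) - 3 * H) / H ^ 2

lemma s9u_deriv (H x0 : ℝ) (x : ℝ) : HasDerivAt (fun y => (y - x0) / H) (1 / H) x := by
  simpa using ((hasDerivAt_id x).sub_const x0).div_const H

lemma s9p1_deriv (H x0 : ℝ) (hH : 0 < H) (x : ℝ) :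
    HasDerivAt (fun y => ((y - x0) / H) ^ 2 / 2) ((x - x0) / H ^ 2) x := by
  have h := ((s9u_deriv H x0 x).pow 2).div_const 2
  refine h.congr_deriv ?_
  norm_num
  field_simp

lemma s9p2_deriv (H x0 : ℝ) (hH : 0 < H) (x : ℝ) :
    HasDerivAt (fun y => (-2 * ((y - x0) / H) ^ 2 + 6 * ((y - x0) / H) - 3) / 2)
      ((3 * H - 2 * (x - x0)) / H ^ 2) x := by
  have h := ((((s9u_deriv H x0 x).pow 2).const_mul (-2)).add
    ((s9u_deriv H x0 x).const_mul 6)).sub_const 3 |>.div_const 2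
  refine h.congr_deriv ?_
  norm_num
  field_simp
  ring

lemma s9p3_deriv (H x0 : ℝ) (hH : 0 < H) (x : ℝ) :
    HasDerivAt (fun y => (3 - (y - x0) / H) ^ 2 / 2) (((x - x0) - 3 * H) / H ^ 2) x := by
  have h := (((s9u_deriv H x0 x).const_sub 3).pow 2).div_const 2
  refine h.congr_deriv ?_
  norm_num
  field_simp
  ring

lemma s9B_hasDerivAt (H x0 : ℝ) (hH : 0 < H) (x : ℝ) :
    HasDerivAt (s9Bdef H x0) (s9Bd H x0 x) x := by
  have hH' : H ≠ 0 := ne_of_gt hH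
  rcases lt_trichotomy x (x0 + H) with h1 | h1 | h1
  · -- below first knot
    have : s9Bd H x0 x = (x - x0) / H ^ 2 := by simp [s9Bd, le_of_lt h1]
    rw [this]
    refine (s9p1_deriv H x0 hH x).congr_of_eventuallyEq ?_
    filter_upwards [Iio_mem_nhds h1] with y hy
    simp [s9Bdef, le_of_lt (mem_Iio.mp hy)]
  · -- at the first knot
    subst h1
    have hv : s9Bd H x0 (x0 + H) = H / H ^ 2 := by
      simp [s9Bd]
    rw [hv]
    have hle : (x0 + H : ℝ) ≤ x0 + 2 * H := by linarith
    have hL : HasDerivWithinAt (s9Bdef H x0) (H / H ^ 2) (Iic (x0 + H)) (x0 + H) := by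
      have := (s9p1_deriv H x0 hH (x0 + H)).hasDerivWithinAt (s := Iic (x0 + H))
      have h2 : ((x0 + H : ℝ) - x0) / H ^ 2 = H / H ^ 2 := by ring_nf
      rw [h2] at this
      refine this.congr (fun y hy => ?_) ?_
      · simp [s9Bdef, (mem_Iic.mp hy)]
      · simp [s9Bdef]
    have hR : HasDerivWithinAt (s9Bdef H x0) (H / H ^ 2) (Icc (x0 + H) (x0 + 2 * H)) (x0 + H) := by
      have := (s9p2_deriv H x0 hH (x0 + H)).hasDerivWithinAt (s := Icc (x0 + H) (x0 + 2 * H))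
      have h2 : (3 * H - 2 * ((x0 + H : ℝ) - x0)) / H ^ 2 = H / H ^ 2 := by ring_nf
      rw [h2] at this
      refine this.congr (fun y hy => ?_) ?_
      · rcases eq_or_lt_of_le hy.1 with he | hlt
        · rw [← he]
          simp [s9Bdef]
          field_simp
          ring
        · simp [s9Bdef, not_le.mpr hlt, hy.2]
      · simp [s9Bdef]
        field_simp
        ring
    have := hL.union hR
    rw [Iic_union_Icc_eq_Iic hle] at this
    exact this.hasDerivAt (Iic_mem_nhds (by linarith))
  · rcases lt_trichotomy x (x0 + 2 * H) with h2 | h2 | h2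
    · -- strictly between the knots
      have : s9Bd H x0 x = (3 * H - 2 * (x - x0)) / H ^ 2 := by
        simp [s9Bd, not_le.mpr h1, le_of_lt h2]
      rw [this]
      refine (s9p2_deriv H x0 hH x).congr_of_eventuallyEq ?_
      filter_upwards [Ioo_mem_nhds h1 h2] with y hy
      simp [s9Bdef, not_le.mpr hy.1, le_of_lt hy.2]
    · -- at the second knot
      subst h2
      have hv : s9Bd H x0 (x0 + 2 * H) = -H / H ^ 2 := by
        have : ¬ (x0 + 2 * H ≤ x0 + H) := by linarith
        simp only [s9Bd, this, if_false, le_refl, if_true]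
        ring_nf
      rw [hv]
      have hle : (x0 + H : ℝ) ≤ x0 + 2 * H := by linarith
      have hL : HasDerivWithinAt (s9Bdef H x0) (-H / H ^ 2)
          (Icc (x0 + H) (x0 + 2 * H)) (x0 + 2 * H) := by
        have := (s9p2_deriv H x0 hH (x0 + 2 * H)).hasDerivWithinAt
          (s := Icc (x0 + H) (x0 + 2 * H))
        have h2 : (3 * H - 2 * ((x0 + 2 * H : ℝ) - x0)) / H ^ 2 = -H / H ^ 2 := by ring_nf
        rw [h2] at this
        refine this.congr (fun y hy => ?_) ?_
        · rcases eq_or_lt_of_le hy.1 with he | hlt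
          · rw [← he]
            simp [s9Bdef]
            field_simp
            ring
          · simp [s9Bdef, not_le.mpr hlt, hy.2]
        · have hne : ¬ (x0 + 2 * H ≤ x0 + H) := by linarith
          simp [s9Bdef, hne]
      have hR : HasDerivWithinAt (s9Bdef H x0) (-H / H ^ 2) (Ici (x0 + 2 * H)) (x0 + 2 * H) := by
        have := (s9p3_deriv H x0 hH (x0 + 2 * H)).hasDerivWithinAt (s := Ici (x0 + 2 * H))
        have h2 : (((x0 + 2 * H : ℝ) - x0) - 3 * H) / H ^ 2 = -H / H ^ 2 := by ring_nf
        rw [h2] at this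
        refine this.congr (fun y hy => ?_) ?_
        · rcases eq_or_lt_of_le (mem_Ici.mp hy) with he | hlt
          · rw [← he]
            have hne : ¬ (x0 + 2 * H ≤ x0 + H) := by linarith
            simp [s9Bdef, hne]
            field_simp
            ring
          · have hn1 : ¬ (y ≤ x0 + H) := by linarith
            have hn2 : ¬ (y ≤ x0 + 2 * H) := by linarith
            simp [s9Bdef, hn1, hn2]
        · have hne : ¬ (x0 + 2 * H ≤ x0 + H) := by linarith
          simp [s9Bdef, hne]
          field_simp
          ring
      have := hL.union hR
      rw [Icc_union_Ici_eq_Ici hle] at this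
      exact this.hasDerivAt (Ici_mem_nhds (by linarith))
    · -- above the second knot
      have hn1 : ¬ (x ≤ x0 + H) := by linarith
      have hn2 : ¬ (x ≤ x0 + 2 * H) := by linarith
      have : s9Bd H x0 x = ((x - x0) - 3 * H) / H ^ 2 := by simp [s9Bd, hn1, hn2]
      rw [this]
      refine (s9p3_deriv H x0 hH x).congr_of_eventuallyEq ?_
      filter_upwards [Ioi_mem_nhds h2] with y hy
      have hy1 : ¬ (y ≤ x0 + H) := by simp at hy ⊢; linarith
      have hy2 : ¬ (y ≤ x0 + 2 * H) := by simp at hy ⊢; linarith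
      simp [s9Bdef, hy1, hy2]

lemma s9Bd_cont (H x0 : ℝ) (hH : 0 < H) : Continuous (s9Bd H x0) := by
  have hH' : H ≠ 0 := ne_of_gt hH
  unfold s9Bd
  apply Continuous.if_le
  · continuity
  · apply Continuous.if_le
    · continuity
    · continuity
    · continuity
    · continuity
    · intro x hx
      rw [hx]
      field_simp
      ring
  · continuity
  · continuity
  · intro x hx
    have hle : x ≤ x0 + 2 * H := by rw [hx]; linarith
    rw [if_pos hle, hx]
    field_simp
    ring

/-- derivative of the B-spline slope away from the knots -/
lemma s9Bd_deriv (H x0 : ℝ) (hH : 0 < H) (x : ℝ) (h1 : x ≠ x0 + H) (h2 : x ≠ x0 + 2 * H) :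
    HasDerivAt (s9Bd H x0)
      (if x ≤ x0 + H then 1 / H ^ 2 else if x ≤ x0 + 2 * H then -2 / H ^ 2 else 1 / H ^ 2) x := by
  rcases lt_trichotomy x (x0 + H) with hc1 | hc1 | hc1
  · rw [if_pos (le_of_lt hc1)]
    have hd : HasDerivAt (fun y : ℝ => (y - x0) / H ^ 2) (1 / H ^ 2) x := by
      simpa using ((hasDerivAt_id x).sub_const x0).div_const (H ^ 2)
    refine hd.congr_of_eventuallyEq ?_
    filter_upwards [Iio_mem_nhds hc1] with y hy
    simp [s9Bd, le_of_lt (mem_Iio.mp hy)]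
  · exact absurd hc1 h1
  · rcases lt_trichotomy x (x0 + 2 * H) with hc2 | hc2 | hc2
    · rw [if_neg (not_le.mpr hc1), if_pos (le_of_lt hc2)]
      have hd : HasDerivAt (fun y : ℝ => (3 * H - 2 * (y - x0)) / H ^ 2) (-2 / H ^ 2) x := by
        have := (((hasDerivAt_id x).sub_const x0).const_mul (2 : ℝ)).const_sub (3 * H)
          |>.div_const (H ^ 2)
        refine this.congr_deriv ?_
        ring
      refine hd.congr_of_eventuallyEq ?_
      filter_upwards [Ioo_mem_nhds hc1 hc2] with y hy
      simp [s9Bd, not_le.mpr hy.1, le_of_lt hy.2]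
    · exact absurd hc2 h2
    · rw [if_neg (by linarith), if_neg (not_le.mpr hc2)]
      have hd : HasDerivAt (fun y : ℝ => ((y - x0) - 3 * H) / H ^ 2) (1 / H ^ 2) x := by
        simpa using (((hasDerivAt_id x).sub_const x0).sub_const (3 * H)).div_const (H ^ 2)
      refine hd.congr_of_eventuallyEq ?_
      filter_upwards [Ioi_mem_nhds hc2] with y hy
      have hy' : x0 + 2 * H < y := hy
      have hy1 : ¬ (y ≤ x0 + H) := by linarith
      have hy2 : ¬ (y ≤ x0 + 2 * H) := by linarith
      simp [s9Bd, hy1, hy2]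

/-- a function continuous on `[a,b]` with zero derivative on `(a,b)` is constant. -/
lemma s9const {f : ℝ → ℝ} {a b : ℝ} (hab : a ≤ b)
    (hc : ContinuousOn f (Icc a b)) (hd : ∀ x ∈ Ioo a b, HasDerivAt f 0 x) :
    ∀ x ∈ Icc a b, f x = f a := by
  have hdiff : DifferentiableOn ℝ f (interior (Icc a b)) := by
    rw [interior_Icc]
    exact fun x hx => (hd x hx).differentiableAt.differentiableWithinAt
  have hz : ∀ x ∈ interior (Icc a b), deriv f x = 0 := by
    rw [interior_Icc]
    exact fun x hx => (hd x hx).deriv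
  have hmono : MonotoneOn f (Icc a b) :=
    monotoneOn_of_deriv_nonneg (convex_Icc a b) hc hdiff (fun x hx => (hz x hx).ge)
  have hanti : AntitoneOn f (Icc a b) :=
    antitoneOn_of_deriv_nonpos (convex_Icc a b) hc hdiff (fun x hx => (hz x hx).le)
  intro x hx
  have ha : a ∈ Icc a b := ⟨le_refl a, hab⟩
  exact le_antisymm (hanti ha hx hx.1) (hmono ha hx hx.1)

/-- for `A ≡ 1` in 1d on a uniform mesh of size `H`, the localized basis
function obtained by solving `−φ'' = g` on the patch `[x₀, x₀+3H]` of three consecutive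
intervals with homogeneous Dirichlet boundary conditions, where the piecewise constant
source `g` takes values proportional to `1, −2, 1` on the three intervals (so that `g` is
`L²`-orthogonal to affine functions), is a scalar multiple of the quadratic B-spline `B`
with knots at the four mesh points of the patch. -/
theorem statement9
    (H x0 c : ℝ) (hH : 0 < H)
    (g B φ φ' : ℝ → ℝ)
    (hg : ∀ x, g x = if x ≤ x0 + H then c else if x ≤ x0 + 2 * H then -2 * c else c)
    (hB : ∀ x, B x =
      if x ≤ x0 + H then ((x - x0) / H) ^ 2 / 2
      else if x ≤ x0 + 2 * H then
        (-2 * ((x - x0) / H) ^ 2 + 6 * ((x - x0) / H) - 3) / 2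
      else (3 - (x - x0) / H) ^ 2 / 2)
    (hcont : ContinuousOn φ (Icc x0 (x0 + 3 * H)))
    (hd1 : ∀ x ∈ Ioo x0 (x0 + 3 * H), HasDerivAt φ (φ' x) x)
    (hd1cont : ContinuousOn φ' (Ioo x0 (x0 + 3 * H)))
    (hd2 : ∀ x ∈ Ioo x0 (x0 + 3 * H),
      x ≠ x0 + H → x ≠ x0 + 2 * H → HasDerivAt φ' (-(g x)) x)
    (hb0 : φ x0 = 0) (hb3 : φ (x0 + 3 * H) = 0) :
    ∃ s : ℝ, ∀ x ∈ Icc x0 (x0 + 3 * H), φ x = s * B x := by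
  have hH' : H ≠ 0 := ne_of_gt hH
  have hBeq : B = s9Bdef H x0 := by funext x; rw [hB x]; rfl
  set s : ℝ := -c * H ^ 2 with hs
  refine ⟨s, ?_⟩
  -- the defect function and its derivative
  set ψ : ℝ → ℝ := fun x => φ x - s * s9Bdef H x0 x with hψ
  set ψ' : ℝ → ℝ := fun x => φ' x - s * s9Bd H x0 x with hψ'
  have hψd : ∀ x ∈ Ioo x0 (x0 + 3 * H), HasDerivAt ψ (ψ' x) x := fun x hx =>
    (hd1 x hx).sub ((s9B_hasDerivAt H x0 hH x).const_mul s)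
  have hBc : Continuous (s9Bdef H x0) :=
    continuous_iff_continuousAt.mpr fun x => (s9B_hasDerivAt H x0 hH x).continuousAt
  have hψcont : ContinuousOn ψ (Icc x0 (x0 + 3 * H)) :=
    hcont.sub (continuous_const.mul hBc).continuousOn
  have hψ'cont : ContinuousOn ψ' (Ioo x0 (x0 + 3 * H)) :=
    hd1cont.sub ((continuous_const.mul (s9Bd_cont H x0 hH)).continuousOn)
  have hψ'd : ∀ x ∈ Ioo x0 (x0 + 3 * H), x ≠ x0 + H → x ≠ x0 + 2 * H →
      HasDerivAt ψ' 0 x := by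
    intro x hx h1 h2
    have hB' := (s9Bd_deriv H x0 hH x h1 h2).const_mul s
    have := (hd2 x hx h1 h2).sub hB'
    refine this.congr_deriv ?_
    rw [hg x, hs]
    have hH2 : (H : ℝ) ^ 2 ≠ 0 := pow_ne_zero 2 hH'
    by_cases hc1 : x ≤ x0 + H
    · simp only [if_pos hc1]
      field_simp
      ring
    · by_cases hc2 : x ≤ x0 + 2 * H
      · simp only [if_neg hc1, if_pos hc2]
        field_simp
        ring
      · simp only [if_neg hc1, if_neg hc2]
        field_simp
        ring
  -- ψ' is constant on the open patch
  have hk1 : x0 + H ∈ Ioo x0 (x0 + 3 * H) := ⟨by linarith, by linarith⟩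
  have hk2 : x0 + 2 * H ∈ Ioo x0 (x0 + 3 * H) := ⟨by linarith, by linarith⟩
  set v : ℝ := ψ' (x0 + H) with hv
  have hmid : ∀ x ∈ Icc (x0 + H) (x0 + 2 * H), ψ' x = v := by
    have hsub : Icc (x0 + H) (x0 + 2 * H) ⊆ Ioo x0 (x0 + 3 * H) := fun y hy =>
      ⟨by have := hy.1; linarith, by have := hy.2; linarith⟩
    exact s9const (by linarith) (hψ'cont.mono hsub)
      (fun y hy => hψ'd y (hsub (Ioo_subset_Icc_self hy))
        (ne_of_gt hy.1) (ne_of_lt hy.2))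
  have hconstψ' : ∀ x ∈ Ioo x0 (x0 + 3 * H), ψ' x = v := by
    intro x hx
    rcases lt_trichotomy x (x0 + H) with hc1 | hc1 | hc1
    · -- on [x, x0+H]
      have hsub : Icc x (x0 + H) ⊆ Ioo x0 (x0 + 3 * H) := fun y hy =>
        ⟨by have := hy.1; have := hx.1; linarith, by have := hy.2; linarith⟩
      have := s9const (le_of_lt hc1) (hψ'cont.mono hsub)
        (fun y hy => hψ'd y (hsub (Ioo_subset_Icc_self hy))
          (ne_of_lt hy.2) (by have := hy.2; intro h; rw [h] at this; linarith))
        (x0 + H) ⟨le_of_lt hc1, le_refl _⟩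
      rw [hv, this]
    · rw [hc1]
    · rcases le_or_gt x (x0 + 2 * H) with hc2 | hc2
      · exact hmid x ⟨le_of_lt hc1, hc2⟩
      · -- on [x0+2H, x]
        have hsub : Icc (x0 + 2 * H) x ⊆ Ioo x0 (x0 + 3 * H) := fun y hy =>
          ⟨by have := hy.1; linarith, by have := hy.2; have := hx.2; linarith⟩
        have h2v : ψ' (x0 + 2 * H) = v :=
          hmid (x0 + 2 * H) ⟨by linarith, le_refl _⟩
        have := s9const (le_of_lt hc2) (hψ'cont.mono hsub)
          (fun y hy => hψ'd y (hsub (Ioo_subset_Icc_self hy))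
            (by have := hy.1; intro h; rw [h] at this; linarith) (ne_of_gt hy.1))
          x ⟨le_of_lt hc2, le_refl _⟩
        rw [this, h2v]
  -- θ x = ψ x - v * x is constant on the closed patch
  set θ : ℝ → ℝ := fun x => ψ x - v * x with hθ
  have hθcont : ContinuousOn θ (Icc x0 (x0 + 3 * H)) :=
    hψcont.sub (continuous_const.mul continuous_id).continuousOn
  have hθd : ∀ x ∈ Ioo x0 (x0 + 3 * H), HasDerivAt θ 0 x := by
    intro x hx
    have := (hψd x hx).sub ((hasDerivAt_id x).const_mul v)
    rw [hconstψ' x hx] at this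
    simp at this
    exact this
  have hθconst := s9const (by linarith : x0 ≤ x0 + 3 * H) hθcont hθd
  -- boundary values
  have hB0 : s9Bdef H x0 x0 = 0 := by
    simp [s9Bdef, le_of_lt hH]
  have hB3 : s9Bdef H x0 (x0 + 3 * H) = 0 := by
    have h1 : ¬ (x0 + 3 * H ≤ x0 + H) := by linarith
    have h2 : ¬ (x0 + 3 * H ≤ x0 + 2 * H) := by linarith
    simp only [s9Bdef, h1, h2, if_false]
    field_simp
    ring
  have hψ0 : ψ x0 = 0 := by rw [hψ]; simp [hb0, hB0]
  have hψ3 : ψ (x0 + 3 * H) = 0 := by rw [hψ]; simp [hb3, hB3]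
  have hv0 : v = 0 := by
    have h3 := hθconst (x0 + 3 * H) ⟨by linarith, le_refl _⟩
    simp only [hθ] at h3
    rw [hψ0, hψ3] at h3
    have hv3 : v * (3 * H) = 0 := by linarith
    rcases mul_eq_zero.mp hv3 with h | h
    · exact h
    · exact absurd h (by positivity)
  -- conclude
  intro x hx
  have hx' := hθconst x hx
  simp only [hθ] at hx'
  rw [hψ0, hv0] at hx'
  have hψx : ψ x = 0 := by linarith
  simp only [hψ] at hψx
  rw [hBeq]
  linarith
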